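/- Let (μ_n) be a growth rate with constant η, let λ > 0, M ≥ 1, c > 0, ℓ ∈ ℤ⁺, and let (x_n)_{n≥0} be a sequence of nonnegative reals satisfying x_n ≤ M (μ_{ℓ+n}/μ_ℓ)^{λ} x_0 + M c Σ_{j=0}^{n−1} (μ_{ℓ+n}/μ_{ℓ+j+1})^{λ} φ_{ℓ+j+1}^{−1} x_j, where φ_m = μ_m/(μ_{m+1}−μ_m). Then x_n ≤ M (μ_{ℓ+n}/μ_ℓ)^{λ} exp(M c Σ_{j=ℓ+1}^{ℓ+n} φ_j^{−1}) x_0 ≤ M η^{Mcη} (μ_{ℓ+n}/μ_ℓ)^{λ + Mcη} x_0 for all n ≥ 0. -/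

import Mathlib

open Finset

/-- Discrete Gronwall core: telescoping exponential sum bound. -/
lemma gronwall_sum_aux (a : ℕ → ℝ) (c' : ℝ) (n : ℕ) :
    ∑ j ∈ range n, c' * a j * Real.exp (c' * ∑ i ∈ range j, a i) ≤
      Real.exp (c' * ∑ i ∈ range n, a i) - 1 := by
  induction n with
  | zero => simp
  | succ n ih =>
    rw [Finset.sum_range_succ]
    have hs : c' * ∑ i ∈ range (n + 1), a i
        = c' * ∑ i ∈ range n, a i + c' * a n := by
      rw [Finset.sum_range_succ]; ring
    have h1 : (1 + c' * a n) * Real.exp (c' * ∑ i ∈ range n, a i) ≤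
        Real.exp (c' * ∑ i ∈ range (n + 1), a i) := by
      rw [hs, Real.exp_add]
      have := Real.add_one_le_exp (c' * a n)
      have hpos := Real.exp_pos (c' * ∑ i ∈ range n, a i)
      nlinarith
    nlinarith [Real.exp_pos (c' * ∑ i ∈ range n, a i)]

theorem stmt8 (μ : ℕ → ℝ) (η : ℝ)
    (hpos : ∀ n, 0 < μ n)
    (hmono : StrictMono μ)
    (htend : Filter.Tendsto μ Filter.atTop Filter.atTop)
    (hη : 1 ≤ η) (hgrow : ∀ n, μ (n + 1) ≤ η * μ n)
    (lam M c : ℝ) (hlam : 0 < lam) (hM : 1 ≤ M) (hc : 0 < c) (ℓ : ℕ)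
    (x : ℕ → ℝ) (hxnn : ∀ n, 0 ≤ x n)
    (hrec : ∀ n, x n ≤ M * (μ (ℓ + n) / μ ℓ) ^ lam * x 0 +
      M * c * ∑ j ∈ Finset.range n,
        (μ (ℓ + n) / μ (ℓ + j + 1)) ^ lam *
          ((μ (ℓ + j + 2) - μ (ℓ + j + 1)) / μ (ℓ + j + 1)) * x j) :
    ∀ n, x n ≤ M * (μ (ℓ + n) / μ ℓ) ^ lam *
        Real.exp (M * c * ∑ j ∈ Finset.Icc (ℓ + 1) (ℓ + n), (μ (j + 1) - μ j) / μ j) * x 0 ∧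
      M * (μ (ℓ + n) / μ ℓ) ^ lam *
        Real.exp (M * c * ∑ j ∈ Finset.Icc (ℓ + 1) (ℓ + n), (μ (j + 1) - μ j) / μ j) * x 0 ≤
        M * η ^ (M * c * η) * (μ (ℓ + n) / μ ℓ) ^ (lam + M * c * η) * x 0 := by
  have hηpos : (0:ℝ) < η := lt_of_lt_of_le one_pos hη
  set a : ℕ → ℝ := fun j => (μ (ℓ + j + 2) - μ (ℓ + j + 1)) / μ (ℓ + j + 1) with ha
  have hanneg : ∀ j, 0 ≤ a j := by
    intro j
    apply div_nonneg _ (hpos _).le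
    have : μ (ℓ + j + 1) < μ (ℓ + j + 2) := hmono (by omega)
    linarith
  -- Icc sum equals range sum of a
  have hIcc : ∀ n, ∑ j ∈ Finset.Icc (ℓ + 1) (ℓ + n), (μ (j + 1) - μ j) / μ j
      = ∑ j ∈ range n, a j := by
    intro n
    induction n with
    | zero => simp
    | succ n ihn =>
      have h1 : ℓ + (n + 1) = (ℓ + n) + 1 := by omega
      rw [h1, Finset.sum_Icc_succ_top (by omega : ℓ + 1 ≤ ℓ + n + 1), ihn,
        Finset.sum_range_succ]
  have hMc : (0:ℝ) < M * c := mul_pos (lt_of_lt_of_le one_pos hM) hc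
  -- main Gronwall induction
  have key : ∀ n, x n ≤ M * (μ (ℓ + n) / μ ℓ) ^ lam *
      Real.exp (M * c * ∑ j ∈ range n, a j) * x 0 := by
    intro n
    induction n using Nat.strong_induction_on with
    | _ n ih =>
    have hr : ∀ k, (0:ℝ) < μ (ℓ + k) / μ ℓ := fun k => div_pos (hpos _) (hpos _)
    have hMpos : (0:ℝ) < M := lt_of_lt_of_le one_pos hM
    have hB : 0 ≤ M * (μ (ℓ + n) / μ ℓ) ^ lam * x 0 :=
      mul_nonneg (mul_nonneg hMpos.le (Real.rpow_pos_of_pos (hr n) lam).le) (hxnn 0)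
    have step : ∀ j ∈ range n,
        (μ (ℓ + n) / μ (ℓ + j + 1)) ^ lam * a j * x j ≤
          (μ (ℓ + n) / μ ℓ) ^ lam *
            (a j * (M * Real.exp (M * c * ∑ i ∈ range j, a i) * x 0)) := by
      intro j hj
      rw [Finset.mem_range] at hj
      have hxj := ih j hj
      have hwnn : (0:ℝ) ≤ (μ (ℓ + n) / μ (ℓ + j + 1)) ^ lam :=
        (Real.rpow_pos_of_pos (div_pos (hpos _) (hpos _)) lam).le
      calc (μ (ℓ + n) / μ (ℓ + j + 1)) ^ lam * a j * x j
          ≤ (μ (ℓ + n) / μ (ℓ + j + 1)) ^ lam * a j *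
            (M * (μ (ℓ + j) / μ ℓ) ^ lam * Real.exp (M * c * ∑ i ∈ range j, a i) * x 0) := by
            apply mul_le_mul_of_nonneg_left hxj (mul_nonneg hwnn (hanneg j))
        _ = ((μ (ℓ + n) / μ (ℓ + j + 1)) ^ lam * (μ (ℓ + j) / μ ℓ) ^ lam) *
            (a j * (M * Real.exp (M * c * ∑ i ∈ range j, a i) * x 0)) := by ring
        _ ≤ (μ (ℓ + n) / μ ℓ) ^ lam *
            (a j * (M * Real.exp (M * c * ∑ i ∈ range j, a i) * x 0)) := by
            apply mul_le_mul_of_nonneg_right _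
              (mul_nonneg (hanneg j) (mul_nonneg (mul_nonneg hMpos.le
                (Real.exp_pos _).le) (hxnn 0)))
            rw [← Real.mul_rpow (div_pos (hpos _) (hpos _)).le (hr j).le]
            apply Real.rpow_le_rpow
              (mul_nonneg (div_nonneg (hpos _).le (hpos _).le)
                (div_nonneg (hpos _).le (hpos _).le)) _ hlam.le
            rw [div_mul_div_comm,
              div_le_div_iff₀ (mul_pos (hpos _) (hpos _)) (hpos _)]
            have h1 : μ (ℓ + j) ≤ μ (ℓ + j + 1) := (hmono (by omega)).le
            have h2 : (0:ℝ) < μ (ℓ + n) := hpos _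
            have h3 : (0:ℝ) < μ ℓ := hpos _
            nlinarith [mul_le_mul_of_nonneg_left
              (mul_le_mul_of_nonneg_right h1 h3.le) h2.le]
    have hsum := gronwall_sum_aux a (M * c) n
    calc x n ≤ M * (μ (ℓ + n) / μ ℓ) ^ lam * x 0 +
        M * c * ∑ j ∈ range n,
          (μ (ℓ + n) / μ (ℓ + j + 1)) ^ lam * a j * x j := hrec n
      _ ≤ M * (μ (ℓ + n) / μ ℓ) ^ lam * x 0 +
        M * c * ∑ j ∈ range n, (μ (ℓ + n) / μ ℓ) ^ lam *
            (a j * (M * Real.exp (M * c * ∑ i ∈ range j, a i) * x 0)) := by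
          apply add_le_add_right
          exact mul_le_mul_of_nonneg_left (Finset.sum_le_sum step) hMc.le
      _ = M * (μ (ℓ + n) / μ ℓ) ^ lam * x 0 *
          (1 + ∑ j ∈ range n, M * c * a j * Real.exp (M * c * ∑ i ∈ range j, a i)) := by
          rw [Finset.mul_sum, mul_add, mul_one, Finset.mul_sum]
          congr 1
          apply Finset.sum_congr rfl
          intro j _; ring
      _ ≤ M * (μ (ℓ + n) / μ ℓ) ^ lam * x 0 *
          Real.exp (M * c * ∑ j ∈ range n, a j) := by
          apply mul_le_mul_of_nonneg_left _ hB
          linarith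
      _ = M * (μ (ℓ + n) / μ ℓ) ^ lam * Real.exp (M * c * ∑ j ∈ range n, a j) * x 0 := by
          ring
  -- sum estimate
  have hsumest : ∀ n, ∑ j ∈ range n, a j ≤
      η * (Real.log η + Real.log (μ (ℓ + n) / μ ℓ)) := by
    intro n
    have hterm : ∀ j, a j ≤ η * (Real.log (μ (ℓ + j + 2)) - Real.log (μ (ℓ + j + 1))) := by
      intro j
      have hp1 : (0:ℝ) < μ (ℓ + j + 1) := hpos _
      have hp2 : (0:ℝ) < μ (ℓ + j + 2) := hpos _
      set t : ℝ := μ (ℓ + j + 2) / μ (ℓ + j + 1) with ht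
      have htpos : 0 < t := div_pos hp2 hp1
      have ht1 : 1 ≤ t := by
        rw [le_div_iff₀ hp1]
        have := hmono (show ℓ + j + 1 < ℓ + j + 2 by omega)
        linarith
      have htη : t ≤ η := by
        rw [div_le_iff₀ hp1]
        exact hgrow (ℓ + j + 1)
      have hlog : 1 - t⁻¹ ≤ Real.log t := by
        have := Real.log_le_sub_one_of_pos (show (0:ℝ) < t⁻¹ by positivity)
        rw [Real.log_inv] at this
        linarith
      have hlogsub : Real.log t = Real.log (μ (ℓ + j + 2)) - Real.log (μ (ℓ + j + 1)) :=
        Real.log_div hp2.ne' hp1.ne'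
      have haj : a j = t - 1 := by
        simp only [ha, ht]
        field_simp
      rw [haj, ← hlogsub]
      -- t - 1 ≤ η * log t, using log t ≥ 1 - 1/t and t ≤ η
      have hlt : 0 ≤ Real.log t := Real.log_nonneg ht1
      have h2 : t - 1 ≤ t * Real.log t := by
        have h3 : t * (1 - t⁻¹) ≤ t * Real.log t :=
          mul_le_mul_of_nonneg_left hlog htpos.le
        have h4 : t * (1 - t⁻¹) = t - 1 := by field_simp
        linarith
      nlinarith [mul_le_mul_of_nonneg_right htη hlt]
    calc ∑ j ∈ range n, a j
        ≤ ∑ j ∈ range n, η * (Real.log (μ (ℓ + j + 2)) - Real.log (μ (ℓ + j + 1))) :=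
          Finset.sum_le_sum fun j _ => hterm j
      _ = η * (Real.log (μ (ℓ + n + 1)) - Real.log (μ (ℓ + 1))) := by
          rw [← Finset.mul_sum]
          congr 1
          have := Finset.sum_range_sub (fun k => Real.log (μ (ℓ + k + 1))) n
          simpa [add_assoc] using this
      _ ≤ η * (Real.log η + Real.log (μ (ℓ + n) / μ ℓ)) := by
          apply mul_le_mul_of_nonneg_left _ (by linarith)
          rw [Real.log_div (hpos _).ne' (hpos _).ne']
          have h1 : Real.log (μ (ℓ + n + 1)) ≤ Real.log η + Real.log (μ (ℓ + n)) := by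
            rw [← Real.log_mul hηpos.ne' (hpos _).ne']
            exact Real.log_le_log (hpos _) (hgrow (ℓ + n))
          have h2 : Real.log (μ ℓ) ≤ Real.log (μ (ℓ + 1)) :=
            Real.log_le_log (hpos _) (hmono (by omega)).le
          linarith
  intro n
  have hrn : (0:ℝ) < μ (ℓ + n) / μ ℓ := div_pos (hpos _) (hpos _)
  have hexp : Real.exp (M * c * ∑ j ∈ range n, a j) ≤
      η ^ (M * c * η) * (μ (ℓ + n) / μ ℓ) ^ (M * c * η) := by
    have h1 : M * c * ∑ j ∈ range n, a j ≤
        M * c * η * Real.log η + M * c * η * Real.log (μ (ℓ + n) / μ ℓ) := by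
      have := mul_le_mul_of_nonneg_left (hsumest n) hMc.le
      nlinarith [hsumest n]
    calc Real.exp (M * c * ∑ j ∈ range n, a j)
        ≤ Real.exp (M * c * η * Real.log η + M * c * η * Real.log (μ (ℓ + n) / μ ℓ)) :=
          Real.exp_le_exp.mpr h1
      _ = η ^ (M * c * η) * (μ (ℓ + n) / μ ℓ) ^ (M * c * η) := by
          rw [Real.exp_add, Real.rpow_def_of_pos hηpos, Real.rpow_def_of_pos hrn]
          ring_nf
  constructor
  · rw [hIcc n]; exact key n
  · rw [hIcc n, Real.rpow_add hrn]
    calc M * (μ (ℓ + n) / μ ℓ) ^ lam *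
        Real.exp (M * c * ∑ j ∈ range n, a j) * x 0
        ≤ M * (μ (ℓ + n) / μ ℓ) ^ lam *
          (η ^ (M * c * η) * (μ (ℓ + n) / μ ℓ) ^ (M * c * η)) * x 0 := by
          apply mul_le_mul_of_nonneg_right _ (hxnn 0)
          apply mul_le_mul_of_nonneg_left hexp
          have := Real.rpow_pos_of_pos hrn lam
          positivity
      _ = M * η ^ (M * c * η) *
          ((μ (ℓ + n) / μ ℓ) ^ lam * (μ (ℓ + n) / μ ℓ) ^ (M * c * η)) * x 0 := by ring
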